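/- Fix α ∈ (1/2, 1), C ∈ ℝ and K > e^{C/2}, and for n ≥ 2 set R_n = 2 ln n + C and r'_n = ln(K·n) (so that r'_n > R_n/2 for all n). Then there exist constants 0 < c ≤ c' and N such that for all n ≥ N, c · n^{1−α} ≤ n · J(r'_n, R_n) ≤ c' · n^{1−α}, where J(r, R) = (1/(2π)) ∫_0^{2π} ∫_0^{min(r,R)} 1[cosh r · cosh s − sinh r · sinh s · cos φ ≤ cosh R] · (α sinh(α s)/(cosh(α R) − 1)) ds dφ. (In the hyperbolic random graph model, the expected inner degree of a vertex with radial coordinate r'_n is of order n^{1−α}.) -/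

import Mathlib

/-- `hrgJ α r R` is the probability measure `μ(B_r(R) ∩ B_0(r))` in the hyperbolic
random graph model: the probability that a vertex sampled in the disk of radius `R`
(with radial density `α sinh(α s)/(cosh(α R) - 1)` and uniform angle) has radial
coordinate at most `r` and lies within hyperbolic distance `R` of the point `(r, 0)`. -/
noncomputable def hrgJ (α r R : ℝ) : ℝ :=
  (1 / (2 * Real.pi)) * ∫ φ in (0 : ℝ)..(2 * Real.pi), ∫ s in (0 : ℝ)..(min r R),
    if Real.cosh r * Real.cosh s - Real.sinh r * Real.sinh s * Real.cos φ ≤ Real.cosh R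
    then α * Real.sinh (α * s) / (Real.cosh (α * R) - 1) else 0

open Real MeasureTheory intervalIntegral in
lemma hrg_integral_density (α x : ℝ) :
    ∫ s in (0:ℝ)..x, α * Real.sinh (α * s) = Real.cosh (α * x) - 1 := by
  have h : ∀ s ∈ Set.uIcc (0:ℝ) x,
      HasDerivAt (fun t => Real.cosh (α * t)) (α * Real.sinh (α * s)) s := by
    intro s _
    have h1 : HasDerivAt (fun t : ℝ => α * t) α s := by
      simpa using (hasDerivAt_id s).const_mul α
    have := (Real.hasDerivAt_cosh (α * s)).comp s h1
    rw [show α * Real.sinh (α * s) = Real.sinh (α * s) * α from mul_comm _ _]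
    exact this
  have hint : IntervalIntegrable (fun s => α * Real.sinh (α * s)) volume 0 x :=
    (by continuity : Continuous fun s => α * Real.sinh (α * s)).intervalIntegrable 0 x
  rw [intervalIntegral.integral_eq_sub_of_hasDerivAt h hint]
  simp

lemma sinh_nonneg' {x : ℝ} (hx : 0 ≤ x) : 0 ≤ Real.sinh x := by
  simpa using Real.sinh_le_sinh.mpr hx

lemma cosh_le_exp' {x : ℝ} (hx : 0 ≤ x) : Real.cosh x ≤ Real.exp x := by
  rw [Real.cosh_eq]
  have h1 : Real.exp (-x) ≤ Real.exp x := Real.exp_le_exp.mpr (by linarith)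
  linarith

open Real MeasureTheory intervalIntegral in
lemma hrgJ_bounds (α r R : ℝ) (hα : 0 < α) (hr : 0 ≤ r) (hrR : r ≤ R) (h2 : R ≤ 2 * r)
    (hR : 0 < R) :
    (Real.cosh (α * (R - r)) - 1) / (Real.cosh (α * R) - 1) ≤ hrgJ α r R ∧
      hrgJ α r R ≤ (Real.cosh (α * r) - 1) / (Real.cosh (α * R) - 1) := by
  have hD : 0 < Real.cosh (α * R) - 1 := by
    have := Real.one_lt_cosh.mpr (show α * R ≠ 0 by positivity)
    linarith
  set D := Real.cosh (α * R) - 1 with hDdef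
  set g : ℝ → ℝ := fun s => α * Real.sinh (α * s) / D with hgdef
  set f : ℝ → ℝ → ℝ := fun φ s =>
    if Real.cosh r * Real.cosh s - Real.sinh r * Real.sinh s * Real.cos φ ≤ Real.cosh R
    then g s else 0 with hfdef
  have hgc : Continuous g := by
    apply Continuous.div_const
    continuity
  have hg_int : ∀ a b : ℝ, IntervalIntegrable g volume a b := fun a b =>
    hgc.intervalIntegrable a b
  have hg_nonneg : ∀ s : ℝ, 0 ≤ s → 0 ≤ g s := by
    intro s hs
    have : 0 ≤ Real.sinh (α * s) := sinh_nonneg' (by positivity)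
    positivity
  have hgint_eval : ∀ x : ℝ, (∫ s in (0:ℝ)..x, g s) = (Real.cosh (α * x) - 1) / D := by
    intro x
    rw [hgdef]
    simp only
    rw [intervalIntegral.integral_div, hrg_integral_density]
  have hfmeas : ∀ φ, Measurable (f φ) := by
    intro φ
    apply Measurable.ite _ hgc.measurable measurable_const
    exact measurableSet_le (by continuity : Continuous fun s : ℝ =>
      Real.cosh r * Real.cosh s - Real.sinh r * Real.sinh s * Real.cos φ).measurable
      measurable_const
  have hf_le_g : ∀ φ s, ‖f φ s‖ ≤ ‖g s‖ := by
    intro φ s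
    rw [hfdef]
    simp only
    split <;> simp [norm_of_nonneg, abs_nonneg]
  have hf_int : ∀ φ a b, IntervalIntegrable (f φ) volume a b := by
    intro φ a b
    exact (hg_int a b).mono_fun ((hfmeas φ).aestronglyMeasurable)
      (Filter.Eventually.of_forall fun s => hf_le_g φ s)
  have hf_nonneg : ∀ φ s, 0 ≤ s → 0 ≤ f φ s := by
    intro φ s hs
    rw [hfdef]
    simp only
    split
    · exact hg_nonneg s hs
    · exact le_rfl
  have hRr0 : 0 ≤ R - r := by linarith
  have hRrr : R - r ≤ r := by linarith
  -- pointwise bounds on inner integral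
  have hinner_lower : ∀ φ : ℝ,
      (Real.cosh (α * (R - r)) - 1) / D ≤ ∫ s in (0:ℝ)..r, f φ s := by
    intro φ
    have hsplit : (∫ s in (0:ℝ)..(R - r), f φ s) + ∫ s in (R - r)..r, f φ s
        = ∫ s in (0:ℝ)..r, f φ s :=
      intervalIntegral.integral_add_adjacent_intervals (hf_int φ 0 (R - r)) (hf_int φ (R - r) r)
    have h1 : (∫ s in (0:ℝ)..(R - r), f φ s) = ∫ s in (0:ℝ)..(R - r), g s := by
      apply intervalIntegral.integral_congr
      intro s hs
      rw [Set.uIcc_of_le hRr0] at hs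
      obtain ⟨hs0, hs1⟩ := hs
      rw [hfdef]
      simp only
      rw [if_pos]
      have hsr : 0 ≤ Real.sinh r := sinh_nonneg' hr
      have hss : 0 ≤ Real.sinh s := sinh_nonneg' hs0
      have hcos : -1 ≤ Real.cos φ := Real.neg_one_le_cos φ
      have hle : Real.cosh r * Real.cosh s - Real.sinh r * Real.sinh s * Real.cos φ
          ≤ Real.cosh (r + s) := by
        rw [Real.cosh_add]
        nlinarith [mul_le_mul_of_nonneg_left hcos (mul_nonneg hsr hss)]
      have hle2 : Real.cosh (r + s) ≤ Real.cosh R := by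
        rw [Real.cosh_le_cosh]
        rw [abs_of_nonneg (by linarith), abs_of_nonneg (by linarith)]
        linarith
      linarith
    have h2' : 0 ≤ ∫ s in (R - r)..r, f φ s := by
      apply intervalIntegral.integral_nonneg hRrr
      intro s hs
      exact hf_nonneg φ s (le_trans hRr0 hs.1)
    rw [← hsplit, h1, hgint_eval]
    linarith
  have hinner_upper : ∀ φ : ℝ,
      (∫ s in (0:ℝ)..r, f φ s) ≤ (Real.cosh (α * r) - 1) / D := by
    intro φ
    rw [← hgint_eval r]
    apply intervalIntegral.integral_mono_on hr (hf_int φ 0 r) (hg_int 0 r)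
    intro s hs
    rw [hfdef]
    simp only
    split
    · exact le_rfl
    · exact hg_nonneg s hs.1
  have hf_upper2 : ∀ φ s, 0 ≤ s → s ≤ r → f φ s ≤ α * Real.sinh (α * r) / D := by
    intro φ s hs0 hsr
    have hmon : Real.sinh (α * s) ≤ Real.sinh (α * r) := Real.sinh_le_sinh.mpr (by nlinarith)
    have hgle : g s ≤ α * Real.sinh (α * r) / D := by
      rw [hgdef]
      simp only
      exact (div_le_div_iff_of_pos_right hD).mpr (by nlinarith)
    rw [hfdef]
    simp only
    split
    · exact hgle
    · exact le_trans (hg_nonneg s hs0) hgle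
  -- outer integral
  set inner : ℝ → ℝ := fun φ => ∫ s in (0:ℝ)..r, f φ s with hinnerdef
  have hinner_meas : MeasureTheory.StronglyMeasurable inner := by
    have hF : Measurable (fun p : ℝ × ℝ =>
        if Real.cosh r * Real.cosh p.2 - Real.sinh r * Real.sinh p.2 * Real.cos p.1 ≤ Real.cosh R
        then g p.2 else 0) := by
      apply Measurable.ite _ (hgc.measurable.comp measurable_snd) measurable_const
      have hc : Continuous fun p : ℝ × ℝ =>
          Real.cosh r * Real.cosh p.2 - Real.sinh r * Real.sinh p.2 * Real.cos p.1 :=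
        ((continuous_const.mul (Real.continuous_cosh.comp continuous_snd)).sub
          ((continuous_const.mul (Real.continuous_sinh.comp continuous_snd)).mul
            (Real.continuous_cos.comp continuous_fst)))
      exact measurableSet_le hc.measurable measurable_const
    have := hF.stronglyMeasurable.integral_prod_right'
      (ν := MeasureTheory.volume.restrict (Set.Ioc (0:ℝ) r))
    have heq : inner = fun φ => ∫ s in Set.Ioc (0:ℝ) r,
        (if Real.cosh r * Real.cosh s - Real.sinh r * Real.sinh s * Real.cos φ ≤ Real.cosh R
        then g s else 0) := by
      funext φ
      rw [hinnerdef]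
      simp only
      rw [intervalIntegral.integral_of_le hr]
    rw [heq]
    exact this
  have hinner_bdd : ∀ φ, ‖inner φ‖ ≤ (α * Real.sinh (α * r) / D) * r := by
    intro φ
    have := intervalIntegral.norm_integral_le_of_norm_le_const
      (C := α * Real.sinh (α * r) / D) (f := f φ) (a := 0) (b := r) ?_
    · simpa [abs_of_nonneg hr] using this
    · intro s hs
      rw [Set.uIoc_of_le hr] at hs
      have hs0 : 0 ≤ s := le_of_lt hs.1
      rw [Real.norm_eq_abs, abs_of_nonneg (hf_nonneg φ s hs0)]
      exact hf_upper2 φ s hs0 hs.2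
  have hM : (0:ℝ) ≤ (α * Real.sinh (α * r) / D) * r := by
    have : 0 ≤ Real.sinh (α * r) := sinh_nonneg' (by positivity)
    positivity
  have hinner_int : IntervalIntegrable inner volume 0 (2 * Real.pi) := by
    apply IntervalIntegrable.mono_fun
      (_root_.intervalIntegrable_const (c := (α * Real.sinh (α * r) / D) * r))
      hinner_meas.aestronglyMeasurable.restrict
    apply Filter.Eventually.of_forall
    intro φ
    calc ‖inner φ‖ ≤ (α * Real.sinh (α * r) / D) * r := hinner_bdd φ
      _ ≤ ‖(α * Real.sinh (α * r) / D) * r‖ := le_abs_self _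
  have hpi : (0:ℝ) < 2 * Real.pi := by positivity
  have houter_lower : 2 * Real.pi * ((Real.cosh (α * (R - r)) - 1) / D)
      ≤ ∫ φ in (0:ℝ)..(2 * Real.pi), inner φ := by
    have h := intervalIntegral.integral_mono_on (le_of_lt hpi)
      (_root_.intervalIntegrable_const (c := (Real.cosh (α * (R - r)) - 1) / D)) hinner_int
      (fun φ _ => hinner_lower φ)
    rw [intervalIntegral.integral_const, smul_eq_mul, sub_zero] at h
    exact h
  have houter_upper : (∫ φ in (0:ℝ)..(2 * Real.pi), inner φ)
      ≤ 2 * Real.pi * ((Real.cosh (α * r) - 1) / D) := by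
    have h := intervalIntegral.integral_mono_on (le_of_lt hpi) hinner_int
      (_root_.intervalIntegrable_const (c := (Real.cosh (α * r) - 1) / D))
      (fun φ _ => hinner_upper φ)
    rw [intervalIntegral.integral_const, smul_eq_mul, sub_zero] at h
    exact h
  have hJ : hrgJ α r R = (1 / (2 * Real.pi)) * ∫ φ in (0:ℝ)..(2 * Real.pi), inner φ := by
    rw [hrgJ, min_eq_left hrR]
  constructor
  · rw [hJ, one_div, inv_mul_eq_div, le_div_iff₀ hpi]
    linarith [houter_lower]
  · rw [hJ, one_div, inv_mul_eq_div, div_le_iff₀ hpi]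
    linarith [houter_upper]


/-- In the hyperbolic random graph model with `R_n = 2 ln n + C`, `K > e^{C/2}` and
`r'_n = ln(K n)` (so `r'_n > R_n/2`), the expected inner degree `n · J(r'_n, R_n)`
of a vertex with radial coordinate `r'_n` is of order `n^(1-α)`: there are constants
`0 < c ≤ c'` with `c n^(1-α) ≤ n · J(r'_n, R_n) ≤ c' n^(1-α)` for all large `n`. -/
theorem expected_inner_degree_order (α C K : ℝ)
    (hα : 1 / 2 < α) (hα1 : α < 1) (hK : Real.exp (C / 2) < K) :
    ∃ c c' : ℝ, 0 < c ∧ c ≤ c' ∧ ∃ N : ℕ, ∀ n : ℕ, N ≤ n →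
      c * (n : ℝ) ^ (1 - α) ≤
          (n : ℝ) * hrgJ α (Real.log (K * n)) (2 * Real.log n + C) ∧
        (n : ℝ) * hrgJ α (Real.log (K * n)) (2 * Real.log n + C) ≤
          c' * (n : ℝ) ^ (1 - α) := by
  have hα0 : (0:ℝ) < α := by linarith
  have hK0 : (0:ℝ) < K := lt_trans (Real.exp_pos _) hK
  have hlogK : C / 2 < Real.log K := (Real.lt_log_iff_exp_lt hK0).mpr hK
  set T : ℝ := Real.log 4 / α + Real.log K - C + 1 with hTdef
  refine ⟨Real.exp (-(α * Real.log K)) / 4,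
    max (4 * Real.exp (α * Real.log K - α * C)) (Real.exp (-(α * Real.log K)) / 4),
    by positivity, le_max_right _ _, ⌈Real.exp T⌉₊ + 2, ?_⟩
  intro n hn
  have hn0 : (0:ℝ) < n := by
    have h2 : ((2:ℕ):ℝ) ≤ (n:ℝ) := Nat.cast_le.mpr (by omega)
    push_cast at h2
    linarith
  have hnT : Real.exp T ≤ (n:ℝ) := by
    have h1 : (⌈Real.exp T⌉₊ : ℝ) ≤ (n:ℝ) := Nat.cast_le.mpr (by omega)
    exact le_trans (Nat.le_ceil _) h1
  have hlogn : T ≤ Real.log n := by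
    rw [← Real.log_exp T]
    exact Real.log_le_log (Real.exp_pos T) hnT
  set Ln : ℝ := Real.log n with hLn
  set r : ℝ := Real.log (K * n) with hrdef
  set R : ℝ := 2 * Ln + C with hRdef
  have hrsplit : r = Real.log K + Ln := by
    rw [hrdef, Real.log_mul (ne_of_gt hK0) (ne_of_gt hn0)]
  have hlog4 : (0:ℝ) < Real.log 4 := Real.log_pos (by norm_num)
  have h1 : Real.log 4 / α ≤ R - r := by
    rw [hrsplit, hRdef, hTdef] at *
    have : Real.log 4 / α + Real.log K - C + 1 ≤ Ln := hlogn
    linarith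
  have hRr0 : (0:ℝ) < R - r := lt_of_lt_of_le (by positivity) h1
  have h2r : R ≤ 2 * r := by rw [hrsplit, hRdef]; linarith
  have hr0 : (0:ℝ) < r := by linarith
  have hrR : r ≤ R := by linarith
  have hR0 : (0:ℝ) < R := lt_of_lt_of_le hr0 hrR
  obtain ⟨hlow, hupp⟩ := hrgJ_bounds α r R hα0 (le_of_lt hr0) hrR h2r hR0
  have hD : (0:ℝ) < Real.cosh (α * R) - 1 := by
    have := Real.one_lt_cosh.mpr (show α * R ≠ 0 by positivity)
    linarith
  have hlog4le : Real.log 4 ≤ α * (R - r) := by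
    rw [div_le_iff₀ hα0] at h1
    linarith [h1]
  have hexpRr : (4:ℝ) ≤ Real.exp (α * (R - r)) := by
    calc (4:ℝ) = Real.exp (Real.log 4) := (Real.exp_log (by norm_num)).symm
      _ ≤ Real.exp (α * (R - r)) := Real.exp_le_exp.mpr hlog4le
  have hexpR : (4:ℝ) ≤ Real.exp (α * R) := by
    refine le_trans hexpRr (Real.exp_le_exp.mpr ?_)
    nlinarith
  have half_cosh : ∀ x : ℝ, Real.exp x / 2 ≤ Real.cosh x := by
    intro x
    rw [Real.cosh_eq]
    linarith [Real.exp_pos (-x)]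
  have hcoshR_ub : Real.cosh (α * R) ≤ Real.exp (α * R) := cosh_le_exp' (by positivity)
  have hcoshR_lb : Real.exp (α * R) / 4 ≤ Real.cosh (α * R) - 1 := by
    linarith [half_cosh (α * R)]
  have hcoshRr_lb : Real.exp (α * (R - r)) / 4 ≤ Real.cosh (α * (R - r)) - 1 := by
    linarith [half_cosh (α * (R - r))]
  have hcoshr_ub : Real.cosh (α * r) - 1 ≤ Real.exp (α * r) := by
    have := cosh_le_exp' (show (0:ℝ) ≤ α * r by positivity)
    linarith
  have hrpow : (n:ℝ) ^ (1 - α) = Real.exp ((1 - α) * Ln) := by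
    rw [Real.rpow_def_of_pos hn0, mul_comm]
  have hn_exp : (n:ℝ) = Real.exp Ln := (Real.exp_log hn0).symm
  constructor
  · -- lower bound
    have harg : Ln + α * (R - r) - α * R = -(α * Real.log K) + (1 - α) * Ln := by
      rw [hrsplit]; ring
    have e1 : Real.exp (-(α * Real.log K)) / 4 * (n:ℝ) ^ (1 - α)
        = (n:ℝ) * (Real.exp (α * (R - r)) / 4 / Real.exp (α * R)) := by
      rw [hrpow, hn_exp]
      calc Real.exp (-(α * Real.log K)) / 4 * Real.exp ((1 - α) * Ln)
          = Real.exp (-(α * Real.log K) + (1 - α) * Ln) / 4 := by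
            rw [Real.exp_add]; ring
        _ = Real.exp (Ln + α * (R - r) - α * R) / 4 := by rw [harg]
        _ = Real.exp Ln * Real.exp (α * (R - r)) / Real.exp (α * R) / 4 := by
            rw [← Real.exp_add, ← Real.exp_sub]
        _ = Real.exp Ln * (Real.exp (α * (R - r)) / 4 / Real.exp (α * R)) := by ring
    rw [e1]
    have hstep : Real.exp (α * (R - r)) / 4 / Real.exp (α * R)
        ≤ (Real.cosh (α * (R - r)) - 1) / (Real.cosh (α * R) - 1) := by
      apply div_le_div₀ (by linarith) hcoshRr_lb hD (by linarith)
    calc (n:ℝ) * (Real.exp (α * (R - r)) / 4 / Real.exp (α * R))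
        ≤ (n:ℝ) * ((Real.cosh (α * (R - r)) - 1) / (Real.cosh (α * R) - 1)) :=
          mul_le_mul_of_nonneg_left hstep (le_of_lt hn0)
      _ ≤ (n:ℝ) * hrgJ α r R := mul_le_mul_of_nonneg_left hlow (le_of_lt hn0)
  · -- upper bound
    have harg2 : Ln + α * r - α * R = α * Real.log K - α * C + (1 - α) * Ln := by
      rw [hrsplit, hRdef]; ring
    have e2 : (n:ℝ) * (Real.exp (α * r) / (Real.exp (α * R) / 4))
        = 4 * Real.exp (α * Real.log K - α * C) * (n:ℝ) ^ (1 - α) := by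
      rw [hrpow, hn_exp]
      calc Real.exp Ln * (Real.exp (α * r) / (Real.exp (α * R) / 4))
          = Real.exp Ln * Real.exp (α * r) / Real.exp (α * R) * 4 := by
            rw [div_div_eq_mul_div]; ring
        _ = Real.exp (Ln + α * r - α * R) * 4 := by rw [← Real.exp_add, ← Real.exp_sub]
        _ = Real.exp (α * Real.log K - α * C + (1 - α) * Ln) * 4 := by rw [harg2]
        _ = 4 * Real.exp (α * Real.log K - α * C) * Real.exp ((1 - α) * Ln) := by
            rw [Real.exp_add]; ring
    have hstep : (Real.cosh (α * r) - 1) / (Real.cosh (α * R) - 1)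
        ≤ Real.exp (α * r) / (Real.exp (α * R) / 4) := by
      apply div_le_div₀ (le_of_lt (Real.exp_pos _)) hcoshr_ub (by linarith) hcoshR_lb
    calc (n:ℝ) * hrgJ α r R
        ≤ (n:ℝ) * ((Real.cosh (α * r) - 1) / (Real.cosh (α * R) - 1)) :=
          mul_le_mul_of_nonneg_left hupp (le_of_lt hn0)
      _ ≤ (n:ℝ) * (Real.exp (α * r) / (Real.exp (α * R) / 4)) :=
          mul_le_mul_of_nonneg_left hstep (le_of_lt hn0)
      _ = 4 * Real.exp (α * Real.log K - α * C) * (n:ℝ) ^ (1 - α) := e2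
      _ ≤ max (4 * Real.exp (α * Real.log K - α * C))
            (Real.exp (-(α * Real.log K)) / 4) * (n:ℝ) ^ (1 - α) :=
          mul_le_mul_of_nonneg_right (le_max_left _ _)
            (Real.rpow_nonneg (le_of_lt hn0) _)
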